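/- Let X and Y be rational vector spaces, f : X → Y, s ≥ 1, and let B ⊆ X be naturally absorbent (for every x ∈ X there is a positive integer k with x ∈ kB). If Δ_{h_1} ⋯ Δ_{h_s} f(x) = 0 for all x ∈ X and all h_1, ..., h_s ∈ B, then Δ_{h_1} ⋯ Δ_{h_s} f(x) = 0 for all x, h_1, ..., h_s ∈ X. -/

import Mathlib

/-- The difference operator `Δ_h f (x) = f (x + h) - f x`. -/
def dd {X Y : Type*} [Add X] [Sub Y] (h : X) (f : X → Y) : X → Y :=
  fun x => f (x + h) - f x

/-- Iterated difference `Δ_{h₁}(Δ_{h₂ ⋯ hₛ} f)` for a list of steps. -/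
def ddIter {X Y : Type*} [Add X] [Sub Y] (hs : List X) (f : X → Y) : X → Y :=
  hs.foldr dd f

lemma ddIter_nil {X Y : Type*} [Add X] [Sub Y] (f : X → Y) : ddIter [] f = f := rfl

lemma ddIter_cons {X Y : Type*} [Add X] [Sub Y] (a : X) (l : List X) (f : X → Y) :
    ddIter (a :: l) f = dd a (ddIter l f) := rfl

lemma ddIter_append {X Y : Type*} [Add X] [Sub Y] (l₁ l₂ : List X) (f : X → Y) :
    ddIter (l₁ ++ l₂) f = ddIter l₁ (ddIter l₂ f) := by
  simp [ddIter, List.foldr_append]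

lemma dd_expand {X Y : Type*} [AddCommGroup X] [Module ℚ X] [AddCommGroup Y]
    (g : X → Y) (z : X) (k : ℕ) (x : X) :
    dd ((k : ℚ) • z) g x = ∑ j ∈ Finset.range k, dd z g (x + (j : ℚ) • z) := by
  induction k with
  | zero => simp [dd]
  | succ k ih =>
      rw [Finset.sum_range_succ, ← ih]
      simp only [dd]
      have hx : x + ((k + 1 : ℕ) : ℚ) • z = x + (k : ℚ) • z + z := by
        push_cast
        rw [add_smul, one_smul, add_assoc]
      rw [hx]
      abel

lemma ddIter_sum_translate {X Y : Type*} [AddCommGroup X] [AddCommGroup Y]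
    (l : List X) (G : X → Y) (k : ℕ) (c : ℕ → X) (x : X) :
    ddIter l (fun y => ∑ j ∈ Finset.range k, G (y + c j)) x
      = ∑ j ∈ Finset.range k, ddIter l G (x + c j) := by
  induction l generalizing x with
  | nil => simp [ddIter]
  | cons a l ih =>
      rw [ddIter_cons, ddIter_cons]
      show ddIter l _ (x + a) - ddIter l _ x = _
      rw [ih, ih, ← Finset.sum_sub_distrib]
      refine Finset.sum_congr rfl fun j _ => ?_
      show _ = ddIter l G (x + c j + a) - ddIter l G (x + c j)
      rw [add_right_comm]

theorem stmt9 {X Y : Type*} [AddCommGroup X] [Module ℚ X] [AddCommGroup Y] [Module ℚ Y]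
    (f : X → Y) (s : ℕ) (hs : 1 ≤ s) (B : Set X)
    (habs : ∀ x : X, ∃ k : ℕ, 0 < k ∧ ∃ z ∈ B, x = (k : ℚ) • z)
    (H : ∀ x : X, ∀ h : Fin s → X, (∀ k, h k ∈ B) → ddIter (List.ofFn h) f x = 0) :
    ∀ (x : X) (h : Fin s → X), ddIter (List.ofFn h) f x = 0 := by
  -- list form of the hypothesis
  have H' : ∀ l : List X, l.length = s → (∀ z ∈ l, z ∈ B) → ∀ x, ddIter l f x = 0 := by
    intro l hl hB x
    subst hl
    have := H x l.get (fun i => hB _ (List.get_mem l i))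
    rwa [List.ofFn_get] at this
  -- key lemma: replace arbitrary steps (in l₁) keeping B-steps (in l₂)
  have key : ∀ l₁ : List X, ∀ l₂ : List X, l₁.length + l₂.length = s →
      (∀ z ∈ l₂, z ∈ B) → ∀ x, ddIter (l₁ ++ l₂) f x = 0 := by
    intro l₁
    induction l₁ using List.reverseRecOn with
    | nil => intro l₂ hlen hB x; simpa using H' l₂ (by simpa using hlen) hB x
    | append_singleton l₁ a ih =>
        intro l₂ hlen hB x
        obtain ⟨k, -, z, hzB, rfl⟩ := habs a
        have hassoc : l₁ ++ [(k : ℚ) • z] ++ l₂ = l₁ ++ ((k : ℚ) • z :: l₂) := by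
          simp
        rw [hassoc, ddIter_append, ddIter_cons]
        have hexp : dd ((k : ℚ) • z) (ddIter l₂ f)
            = fun y => ∑ j ∈ Finset.range k, ddIter (z :: l₂) f (y + (j : ℚ) • z) := by
          funext y
          rw [dd_expand]
          rfl
        rw [hexp, ddIter_sum_translate]
        have hzero : ∀ j ∈ Finset.range k,
            ddIter l₁ (ddIter (z :: l₂) f) (x + (j : ℚ) • z) = 0 := by
          intro j _
          rw [← ddIter_append]
          apply ih (z :: l₂)
          · simp at hlen ⊢; omega
          · intro w hw
            rcases List.mem_cons.mp hw with rfl | hw'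
            · exact hzB
            · exact hB _ hw'
        exact Finset.sum_eq_zero hzero
  intro x h
  have := key (List.ofFn h) [] (by simp) (by simp) x
  simpa using this
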